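/- Let ψ : ℝ → ℝ be a bounded measurable function with ψ(u) = 0 for u ∉ [1/3, 2/3]. Then for every s ∈ ℂ the double integral F₁(s) = ∫_0^∞ ∫_0^∞ t^{s−1} ψ(u) Σ_{n=1}^∞ e^{2λ_n u} erfc(u/√t + λ_n√t) du dt (with t^{s−1} = exp((s−1) log t)) converges absolutely, and F₁ is an entire function of s. -/

import Mathlib

open Real MeasureTheory Set Filter

noncomputable def erfc (x : ℝ) : ℝ :=
  (2 / Real.sqrt π) * ∫ ξ in Set.Ioi x, Real.exp (-ξ ^ 2)

lemma gauss_integrable : Integrable (fun ξ : ℝ => Real.exp (-ξ ^ 2)) := by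
  simpa using integrable_exp_neg_mul_sq (one_pos)

lemma erfc_nonneg' (x : ℝ) : 0 ≤ erfc x := by
  apply mul_nonneg (by positivity)
  exact setIntegral_nonneg measurableSet_Ioi (fun ξ _ => (Real.exp_pos _).le)

lemma erfc_antitone' : Antitone erfc := by
  intro a b hab
  apply mul_le_mul_of_nonneg_left _ (by positivity)
  apply setIntegral_mono_set gauss_integrable.integrableOn
  · exact Filter.Eventually.of_forall (fun ξ => (Real.exp_pos _).le)
  · exact Filter.Eventually.of_forall (fun ξ h => lt_of_le_of_lt hab h)

lemma erfc_measurable' : Measurable erfc := erfc_antitone'.measurable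

lemma erfc_le_exp (x : ℝ) (hx : 0 ≤ x) : erfc x ≤ 2 * Real.exp (-x ^ 2) := by
  have key : (∫ ξ in Set.Ioi x, Real.exp (-ξ ^ 2)) ≤ Real.exp (-x ^ 2) * Real.sqrt π := by
    have h1 : (∫ ξ in Set.Ioi x, Real.exp (-ξ ^ 2))
        ≤ ∫ ξ in Set.Ioi x, Real.exp (-x ^ 2) * Real.exp (-(ξ - x) ^ 2) := by
      apply setIntegral_mono_on
      · exact gauss_integrable.integrableOn
      · exact ((gauss_integrable.comp_sub_right x).const_mul _).integrableOn
      · exact measurableSet_Ioi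
      · intro ξ hξ
        rw [← Real.exp_add]
        apply Real.exp_le_exp.2
        nlinarith [le_of_lt (Set.mem_Ioi.1 hξ)]
    have h2 : (∫ ξ in Set.Ioi x, Real.exp (-x ^ 2) * Real.exp (-(ξ - x) ^ 2))
        ≤ ∫ ξ : ℝ, Real.exp (-x ^ 2) * Real.exp (-(ξ - x) ^ 2) := by
      apply setIntegral_le_integral ((gauss_integrable.comp_sub_right x).const_mul _)
      exact Filter.Eventually.of_forall (fun ξ => by positivity)
    have h3 : (∫ ξ : ℝ, Real.exp (-x ^ 2) * Real.exp (-(ξ - x) ^ 2))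
        = Real.exp (-x ^ 2) * Real.sqrt π := by
      rw [integral_const_mul]
      congr 1
      rw [integral_sub_right_eq_self (fun ξ : ℝ => Real.exp (-ξ ^ 2)) x]
      simpa using integral_gaussian 1
    linarith
  unfold erfc
  have hπ : 0 < Real.sqrt π := Real.sqrt_pos.2 Real.pi_pos
  calc (2 / Real.sqrt π) * ∫ ξ in Set.Ioi x, Real.exp (-ξ ^ 2)
      ≤ (2 / Real.sqrt π) * (Real.exp (-x ^ 2) * Real.sqrt π) := by
        apply mul_le_mul_of_nonneg_left key (by positivity)
    _ = 2 * Real.exp (-x ^ 2) := by field_simp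


lemma pow_le_factorial_mul_exp (x : ℝ) (hx : 0 ≤ x) (m : ℕ) :
    x ^ m ≤ m.factorial * Real.exp x := by
  have h2 : x ^ m / m.factorial ≤ ∑ i ∈ Finset.range (m+1), x ^ i / i.factorial := by
    apply Finset.single_le_sum (f := fun i => x ^ i / (i.factorial : ℝ))
      (fun i _ => by positivity) (Finset.self_mem_range_succ m)
  have h3 := h2.trans (Real.sum_le_exp_of_nonneg hx (m+1))
  rw [div_le_iff₀ (by positivity)] at h3
  rw [mul_comm]
  exact h3

lemma aux_integrable (a k b A C : ℝ) (hb : 0 < b) :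
    IntegrableOn (fun t : ℝ => t ^ a *
      (if t ≤ 1 then C * t ^ (-k) * Real.exp (-1 / (9 * t)) else A * Real.exp (-t * b)))
      (Set.Ioi 0) := by
  have m1 : Measurable fun t : ℝ => t ^ a := by measurability
  have m2 : Measurable fun t : ℝ => C * t ^ (-k) * Real.exp (-1 / (9 * t)) := by
    have : Measurable fun t : ℝ => t ^ (-k) := by measurability
    exact (measurable_const.mul this).mul
      (Real.measurable_exp.comp (measurable_const.div (measurable_const.mul measurable_id)))
  have m3 : Measurable fun t : ℝ => A * Real.exp (-t * b) := by measurability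
  have hmeas : Measurable (fun t : ℝ => t ^ a *
      (if t ≤ 1 then C * t ^ (-k) * Real.exp (-1 / (9 * t)) else A * Real.exp (-t * b))) :=
    m1.mul (Measurable.ite (measurableSet_le measurable_id measurable_const) m2 m3)
  rw [← Set.Ioc_union_Ioi_eq_Ioi (zero_le_one (α := ℝ))]
  apply IntegrableOn.union
  · -- Ioc 0 1
    set m : ℕ := ⌈k - a⌉₊ + 1 with hm
    have hma : (-1 : ℝ) < a - k + m := by
      rw [hm]; push_cast; linarith [Nat.le_ceil (k - a)]
    have hint : IntegrableOn (fun t : ℝ => t ^ (a - k + m)) (Set.Ioc 0 1) := by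
      rw [← intervalIntegrable_iff_integrableOn_Ioc_of_le (zero_le_one)]
      exact intervalIntegral.intervalIntegrable_rpow' hma
    apply Integrable.mono' ((hint.const_mul (|C| * 9 ^ m * m.factorial)))
      (hmeas.aestronglyMeasurable.restrict)
    filter_upwards [ae_restrict_mem measurableSet_Ioc] with t ht
    rcases ht with ⟨ht0, ht1⟩
    rw [if_pos ht1]
    have h9 : (0:ℝ) < 9 * t := by positivity
    have hexp : Real.exp (-1 / (9 * t)) ≤ m.factorial * (9 * t) ^ m := by
      have h1 : (1 / (9 * t)) ^ m ≤ m.factorial * Real.exp (1 / (9 * t)) :=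
        pow_le_factorial_mul_exp _ (by positivity) m
      have h6 : Real.exp (-(1 / (9 * t))) * (1 / (9 * t)) ^ m ≤ (m.factorial : ℝ) := by
        calc Real.exp (-(1 / (9 * t))) * (1 / (9 * t)) ^ m
            ≤ Real.exp (-(1 / (9 * t))) * (m.factorial * Real.exp (1 / (9 * t))) :=
              mul_le_mul_of_nonneg_left h1 (Real.exp_pos _).le
          _ = m.factorial * (Real.exp (-(1 / (9 * t))) * Real.exp (1 / (9 * t))) := by ring
          _ = m.factorial := by rw [← Real.exp_add]; simp
      have h7 : ((1 : ℝ) / (9 * t)) ^ m * (9 * t) ^ m = 1 := by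
        rw [← mul_pow, one_div, inv_mul_cancel₀ h9.ne', one_pow]
      calc Real.exp (-1 / (9 * t)) = Real.exp (-(1 / (9 * t))) * ((1 / (9 * t)) ^ m * (9 * t) ^ m) := by
            rw [h7, neg_div]; ring
        _ = (Real.exp (-(1 / (9 * t))) * (1 / (9 * t)) ^ m) * (9 * t) ^ m := by ring
        _ ≤ m.factorial * (9 * t) ^ m := mul_le_mul_of_nonneg_right h6 (by positivity)
    have hsplit : t ^ (a - k + (m:ℝ)) = t ^ a * t ^ (-k) * t ^ (m:ℝ) := by
      rw [← Real.rpow_add ht0, ← Real.rpow_add ht0]; ring_nf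
    calc ‖t ^ a * (C * t ^ (-k) * Real.exp (-1 / (9 * t)))‖
        = t ^ a * (|C| * t ^ (-k) * Real.exp (-1 / (9 * t))) := by
          rw [Real.norm_eq_abs, abs_mul, abs_mul, abs_mul, abs_of_nonneg (Real.rpow_nonneg ht0.le a),
            abs_of_nonneg (Real.rpow_nonneg ht0.le _), abs_of_nonneg (Real.exp_pos _).le]
      _ ≤ t ^ a * (|C| * t ^ (-k) * (m.factorial * (9 * t) ^ m)) := by
          apply mul_le_mul_of_nonneg_left _ (Real.rpow_nonneg ht0.le a)
          apply mul_le_mul_of_nonneg_left hexp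
          positivity
      _ = |C| * 9 ^ m * m.factorial * t ^ (a - k + m) := by
          rw [mul_pow, ← Real.rpow_natCast t m, hsplit]; ring
  · -- Ioi 1
    set m : ℕ := ⌈a⌉₊ + 2 with hm
    have hint : IntegrableOn (fun t : ℝ => t ^ (-2 : ℝ)) (Set.Ioi 1) :=
      integrableOn_Ioi_rpow_of_lt (by norm_num) one_pos
    apply Integrable.mono' ((hint.const_mul (|A| * (m.factorial / b ^ m))))
      (hmeas.aestronglyMeasurable.restrict)
    filter_upwards [ae_restrict_mem measurableSet_Ioi] with t ht
    have ht1 : (1:ℝ) < t := ht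
    have ht0 : (0:ℝ) < t := lt_trans one_pos ht1
    rw [if_neg (not_le.2 ht1)]
    have key : t ^ a * Real.exp (-t * b) ≤ (m.factorial / b ^ m) * t ^ (-2 : ℝ) := by
      have h1 : t ^ a ≤ t ^ ((m : ℝ) - 2) := by
        apply Real.rpow_le_rpow_of_exponent_le ht1.le
        rw [hm]; push_cast; linarith [Nat.le_ceil a]
      have h3 : (t * b) ^ m ≤ m.factorial * Real.exp (t * b) :=
        pow_le_factorial_mul_exp _ (by positivity) m
      have h4 : t ^ (m:ℝ) * Real.exp (-(t * b)) ≤ (m.factorial : ℝ) / b ^ m := by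
        rw [Real.exp_neg, Real.rpow_natCast, mul_inv_le_iff₀ (Real.exp_pos _),
          div_mul_eq_mul_div, le_div_iff₀ (by positivity)]
        calc t ^ m * b ^ m = (t * b) ^ m := (mul_pow t b m).symm
          _ ≤ m.factorial * Real.exp (t * b) := h3
      have h5 : t ^ ((m:ℝ) - 2) = t ^ (m:ℝ) * t ^ (-2:ℝ) := by
        rw [← Real.rpow_add ht0]; ring_nf
      calc t ^ a * Real.exp (-t * b) ≤ t ^ ((m:ℝ) - 2) * Real.exp (-t * b) :=
            mul_le_mul_of_nonneg_right h1 (Real.exp_pos _).le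
        _ = (t ^ (m:ℝ) * Real.exp (-(t * b))) * t ^ (-2:ℝ) := by rw [h5, neg_mul]; ring
        _ ≤ (m.factorial / b ^ m) * t ^ (-2:ℝ) :=
            mul_le_mul_of_nonneg_right h4 (Real.rpow_nonneg ht0.le _)
    calc ‖t ^ a * (A * Real.exp (-t * b))‖
        = |A| * (t ^ a * Real.exp (-t * b)) := by
          rw [Real.norm_eq_abs, abs_mul, abs_mul, abs_of_nonneg (Real.rpow_nonneg ht0.le a),
            abs_of_nonneg (Real.exp_pos _).le]; ring
      _ ≤ |A| * ((m.factorial / b ^ m) * t ^ (-2:ℝ)) :=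
          mul_le_mul_of_nonneg_left key (abs_nonneg A)
      _ = |A| * (m.factorial / b ^ m) * t ^ (-2:ℝ) := by ring

/-- Lemma A.3. Let `(λ_n)` be positive reals bounded below by `λ_0 > 0` with
`Θ(t) = Σ_n e^{−tλ_n²}` convergent for all `t > 0` and `Θ(t) ≤ C t^{−k}` for `0 < t ≤ 1`.
Let `ψ : ℝ → ℝ` be bounded measurable, vanishing outside `[1/3, 2/3]`. Then for every
`s ∈ ℂ` the double integral
`F₁(s) = ∫_0^∞ ∫_0^∞ t^{s−1} ψ(u) Σ_n e^{2λ_n u} erfc(u/√t + λ_n√t) du dt`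
converges absolutely, and `F₁` is an entire function of `s`. -/
theorem stmt14 (l : ℕ → ℝ) (hl0 : 0 < l 0) (hl : ∀ n, l 0 ≤ l n)
    (hsum : ∀ t : ℝ, 0 < t → Summable fun n => Real.exp (-t * (l n)^2))
    (C k : ℝ) (hC : 0 < C) (hk : 0 < k)
    (hΘ : ∀ t : ℝ, 0 < t → t ≤ 1 → (∑' n, Real.exp (-t * (l n)^2)) ≤ C * t ^ (-k))
    (ψ : ℝ → ℝ) (hψm : Measurable ψ) (hψb : ∃ M : ℝ, ∀ u, |ψ u| ≤ M)
    (hψ0 : ∀ u : ℝ, u ∉ Set.Icc (1/3 : ℝ) (2/3) → ψ u = 0) :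
    (∀ s : ℂ, IntegrableOn
        (fun p : ℝ × ℝ => (p.1 : ℂ) ^ (s - 1) * ((ψ p.2 : ℂ) *
          ((∑' n, Real.exp (2 * l n * p.2) *
            erfc (p.2 / Real.sqrt p.1 + l n * Real.sqrt p.1) : ℝ) : ℂ)))
        (Set.Ioi 0 ×ˢ Set.Ioi 0)) ∧
    Differentiable ℂ (fun s : ℂ => ∫ p in Set.Ioi (0:ℝ) ×ˢ Set.Ioi (0:ℝ),
        (p.1 : ℂ) ^ (s - 1) * ((ψ p.2 : ℂ) *
          ((∑' n, Real.exp (2 * l n * p.2) *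
            erfc (p.2 / Real.sqrt p.1 + l n * Real.sqrt p.1) : ℝ) : ℂ))) := by
  obtain ⟨M, hM⟩ := hψb
  have hM0 : 0 ≤ M := (abs_nonneg _).trans (hM 0)
  set term : ℕ → ℝ × ℝ → ℝ := fun n p =>
    Real.exp (2 * l n * p.2) * erfc (p.2 / Real.sqrt p.1 + l n * Real.sqrt p.1) with hterm_def
  set S : ℝ × ℝ → ℝ := fun p => ∑' n, term n p with hS_def
  set Θ1 : ℝ := ∑' n, Real.exp (-1 * (l n)^2) with hΘ1_def
  have hΘ1_nonneg : 0 ≤ Θ1 := tsum_nonneg (fun n => (Real.exp_pos _).le)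
  set A : ℝ := 2 * (Θ1 * Real.exp ((l 0)^2)) with hA_def
  set W : ℝ → ℝ := fun t =>
    if t ≤ 1 then (2*C) * t ^ (-k) * Real.exp (-1 / (9 * t)) else A * Real.exp (-t * (l 0)^2)
    with hW_def
  set ind : ℝ → ℝ := Set.indicator (Set.Icc (1/3 : ℝ) (2/3)) (fun _ => M) with hind_def
  set F : ℂ → ℝ × ℝ → ℂ := fun s p => (p.1 : ℂ) ^ (s - 1) * ((ψ p.2 : ℂ) * ((S p : ℝ) : ℂ))
    with hF_def
  set μ : Measure (ℝ × ℝ) := volume.restrict (Set.Ioi (0:ℝ) ×ˢ Set.Ioi (0:ℝ)) with hμ_def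
  have hsetm : MeasurableSet (Set.Ioi (0:ℝ) ×ˢ Set.Ioi (0:ℝ)) :=
    measurableSet_Ioi.prod measurableSet_Ioi
  have hlpos : ∀ n, 0 < l n := fun n => lt_of_lt_of_le hl0 (hl n)
  have hterm_nonneg : ∀ n p, 0 ≤ term n p :=
    fun n p => mul_nonneg (Real.exp_pos _).le (erfc_nonneg' _)
  -- pointwise term bound
  have hterm_le : ∀ (n : ℕ) (p : ℝ × ℝ), 0 < p.1 → 0 ≤ p.2 →
      term n p ≤ 2 * Real.exp (-p.2^2 / p.1) * Real.exp (-p.1 * (l n)^2) := by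
    rintro n ⟨t, u⟩ ht hu
    simp only [hterm_def]
    have ht' : (0:ℝ) < t := ht
    have hu' : (0:ℝ) ≤ u := hu
    have hst : 0 < Real.sqrt t := Real.sqrt_pos.2 ht'
    have hx : 0 ≤ u / Real.sqrt t + l n * Real.sqrt t :=
      add_nonneg (div_nonneg hu' hst.le) (mul_nonneg (hlpos n).le hst.le)
    have h1 : Real.sqrt t ^ 2 = t := Real.sq_sqrt ht'.le
    have h4 : Real.sqrt t ^ 4 = t ^ 2 := by
      rw [show Real.sqrt t ^ 4 = (Real.sqrt t ^ 2) ^ 2 by ring, h1]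
    have hsq : (u / Real.sqrt t + l n * Real.sqrt t)^2 = u^2/t + 2*(l n)*u + (l n)^2*t := by
      have h2 : (u / Real.sqrt t + l n * Real.sqrt t)^2
          = u^2/(Real.sqrt t)^2 + 2*(l n)*u + (l n)^2*(Real.sqrt t)^2 := by
        field_simp
        linear_combination
      rw [h2, h1]
    calc Real.exp (2 * l n * u) * erfc (u / Real.sqrt t + l n * Real.sqrt t)
        ≤ Real.exp (2 * l n * u) * (2 * Real.exp (-(u / Real.sqrt t + l n * Real.sqrt t)^2)) :=
          mul_le_mul_of_nonneg_left (erfc_le_exp _ hx) (Real.exp_pos _).le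
      _ = 2 * (Real.exp (2 * l n * u) * Real.exp (-(u / Real.sqrt t + l n * Real.sqrt t)^2)) := by
          ring
      _ = 2 * Real.exp (2 * l n * u + -(u / Real.sqrt t + l n * Real.sqrt t)^2) := by
          rw [Real.exp_add]
      _ = 2 * Real.exp (-u^2/t + -t * (l n)^2) := by
          rw [hsq]; congr 1; ring
      _ = 2 * Real.exp (-u^2 / t) * Real.exp (-t * (l n)^2) := by
          rw [Real.exp_add]; ring
  have hSummable : ∀ p : ℝ × ℝ, 0 < p.1 → 0 ≤ p.2 → Summable (fun n => term n p) := by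
    intro p ht hu
    exact Summable.of_nonneg_of_le (fun n => hterm_nonneg n p) (fun n => hterm_le n p ht hu)
      (((hsum p.1 ht).mul_left (2 * Real.exp (-p.2^2 / p.1))))
  have hS_nonneg : ∀ p, 0 ≤ S p := fun p => tsum_nonneg (fun n => hterm_nonneg n p)
  have hS_le : ∀ p : ℝ × ℝ, 0 < p.1 → 0 ≤ p.2 →
      S p ≤ 2 * Real.exp (-p.2^2 / p.1) * (∑' n, Real.exp (-p.1 * (l n)^2)) := by
    intro p ht hu
    rw [← tsum_mul_left]
    exact Summable.tsum_le_tsum (fun n => hterm_le n p ht hu) (hSummable p ht hu)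
      (((hsum p.1 ht).mul_left _))
  have hΘ_le : ∀ t : ℝ, 1 < t →
      (∑' n, Real.exp (-t * (l n)^2)) ≤ Θ1 * (Real.exp ((l 0)^2) * Real.exp (-t * (l 0)^2)) := by
    intro t htgt
    rw [hΘ1_def, ← tsum_mul_right]
    apply Summable.tsum_le_tsum _ (hsum t (lt_trans one_pos htgt))
      (((hsum 1 one_pos).mul_right (Real.exp ((l 0)^2) * Real.exp (-t * (l 0)^2))))
    intro n
    rw [← Real.exp_add, ← Real.exp_add]
    apply Real.exp_le_exp.2
    nlinarith [pow_le_pow_left₀ hl0.le (hl n) 2]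
  have hW_nonneg : ∀ t : ℝ, 0 < t → 0 ≤ W t := by
    intro t ht
    simp only [hW_def]
    split_ifs
    · positivity
    · positivity
  -- the main pointwise bound
  have hMain : ∀ p : ℝ × ℝ, 0 < p.1 → 0 < p.2 → |ψ p.2| * S p ≤ W p.1 * ind p.2 := by
    rintro ⟨t, u⟩ ht hu
    have ht' : (0:ℝ) < t := ht
    have hu' : (0:ℝ) < u := hu
    by_cases hu3 : u ∈ Set.Icc (1/3 : ℝ) (2/3)
    · have hind1 : ind u = M := by rw [hind_def]; exact Set.indicator_of_mem hu3 _
      show |ψ u| * S (t, u) ≤ W t * ind u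
      rw [hind1]
      have hSW : S (t, u) ≤ W t := by
        have h2 := hS_le (t, u) ht hu.le
        rcases le_or_gt t 1 with htle | htgt
        · have hWt : W t = (2*C) * t ^ (-k) * Real.exp (-1 / (9 * t)) := by
            simp only [hW_def]; rw [if_pos htle]
          rw [hWt]
          have hu2 : -u^2/t ≤ -1/(9*t) := by
            rw [div_le_div_iff₀ ht' (by positivity)]
            have h9 : (1:ℝ)/9 ≤ u^2 := by nlinarith [hu3.1]
            nlinarith [mul_le_mul_of_nonneg_left h9 ht'.le]
          calc S (t, u) ≤ 2 * Real.exp (-u^2/t) * (∑' n, Real.exp (-t * (l n)^2)) := h2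
            _ ≤ 2 * Real.exp (-1/(9*t)) * (C * t ^ (-k)) := by
                apply mul_le_mul _ (hΘ t ht' htle)
                  (tsum_nonneg fun n => (Real.exp_pos _).le) (by positivity)
                exact mul_le_mul_of_nonneg_left (Real.exp_le_exp.2 hu2) (by norm_num)
            _ = (2*C) * t ^ (-k) * Real.exp (-1/(9*t)) := by ring
        · have hWt : W t = A * Real.exp (-t * (l 0)^2) := by
            simp only [hW_def]; rw [if_neg (not_le.2 htgt)]
          rw [hWt, hA_def]
          have he1 : Real.exp (-u^2/t) ≤ 1 := by
            rw [Real.exp_le_one_iff]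
            apply div_nonpos_of_nonpos_of_nonneg _ ht'.le
            simp [sq_nonneg u]
          calc S (t, u) ≤ 2 * Real.exp (-u^2/t) * (∑' n, Real.exp (-t * (l n)^2)) := h2
            _ ≤ 2 * 1 * (Θ1 * (Real.exp ((l 0)^2) * Real.exp (-t * (l 0)^2))) := by
                apply mul_le_mul _ (hΘ_le t htgt)
                  (tsum_nonneg fun n => (Real.exp_pos _).le) (by norm_num)
                exact mul_le_mul_of_nonneg_left he1 (by norm_num)
            _ = 2 * (Θ1 * Real.exp ((l 0)^2)) * Real.exp (-t * (l 0)^2) := by ring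
      calc |ψ u| * S (t, u) ≤ M * S (t, u) :=
            mul_le_mul_of_nonneg_right (hM u) (hS_nonneg _)
        _ ≤ M * W t := mul_le_mul_of_nonneg_left hSW hM0
        _ = W t * M := mul_comm _ _
    · show |ψ u| * S (t, u) ≤ W t * ind u
      rw [hψ0 u hu3, abs_zero, zero_mul, hind_def, Set.indicator_of_notMem hu3, mul_zero]
  -- integrable bound family
  have hbound_int : ∀ a : ℝ,
      Integrable (fun p : ℝ × ℝ => (p.1 ^ a * W p.1) * ind p.2) μ := by
    intro a
    have h1 : IntegrableOn (fun t : ℝ => t ^ a * W t) (Set.Ioi 0) := by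
      simp only [hW_def]
      exact aux_integrable a k ((l 0)^2) A (2*C) (by positivity)
    have h2 : Integrable ind (volume.restrict (Set.Ioi (0:ℝ))) := by
      rw [hind_def]
      exact ((integrableOn_const (C := M) measure_Icc_lt_top.ne).integrable_indicator measurableSet_Icc).restrict
    have h3 := Integrable.mul_prod h1 h2
    rw [Measure.prod_restrict, ← Measure.volume_eq_prod] at h3
    exact h3
  -- measurable surrogate for S
  have hterm_meas : ∀ n, Measurable (term n) := by
    intro n
    apply Measurable.mul
    · exact Real.measurable_exp.comp (measurable_snd.const_mul _)
    · apply erfc_measurable'.comp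
      exact (measurable_snd.div (Real.continuous_sqrt.measurable.comp measurable_fst)).add
        ((Real.continuous_sqrt.measurable.comp measurable_fst).const_mul _)
  set S' : ℝ × ℝ → ℝ := fun p => (∑' n, ENNReal.ofReal (term n p)).toReal with hS'_def
  have hS'_meas : Measurable S' :=
    (Measurable.ennreal_tsum fun n => (hterm_meas n).ennreal_ofReal).ennreal_toReal
  have hS'_eq : ∀ p : ℝ × ℝ, 0 < p.1 → 0 ≤ p.2 → S' p = S p := by
    intro p ht hu
    rw [hS'_def]
    simp only []
    rw [← ENNReal.ofReal_tsum_of_nonneg (fun n => hterm_nonneg n p) (hSummable p ht hu),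
      ENNReal.toReal_ofReal (hS_nonneg p)]
  -- a.e. strong measurability of F s
  have hmem_ae : ∀ᵐ p ∂μ, p ∈ Set.Ioi (0:ℝ) ×ˢ Set.Ioi (0:ℝ) := ae_restrict_mem hsetm
  have hAESM : ∀ s : ℂ, AEStronglyMeasurable (F s) μ := by
    intro s
    have hGmeas : Measurable (fun p : ℝ × ℝ =>
        Complex.exp (Complex.log p.1 * (s - 1)) * ((ψ p.2 : ℂ) * ((S' p : ℝ) : ℂ))) := by
      apply Measurable.mul
      · exact Complex.measurable_exp.comp
          ((Complex.measurable_log.comp (Complex.measurable_ofReal.comp measurable_fst)).mul_const _)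
      · exact (Complex.measurable_ofReal.comp (hψm.comp measurable_snd)).mul
          (Complex.measurable_ofReal.comp hS'_meas)
    apply hGmeas.aestronglyMeasurable.congr
    filter_upwards [hmem_ae] with p hp
    obtain ⟨hpt, hpu⟩ := hp
    rw [hF_def]
    simp only []
    rw [hS'_eq p hpt (le_of_lt hpu),
      Complex.cpow_def_of_ne_zero (Complex.ofReal_ne_zero.2 (ne_of_gt hpt))]
  -- norm identity
  have hnorm : ∀ (s : ℂ) (p : ℝ × ℝ), 0 < p.1 →
      ‖F s p‖ = p.1 ^ (s.re - 1) * (|ψ p.2| * S p) := by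
    intro s p hpt
    rw [hF_def]
    simp only []
    rw [norm_mul, norm_mul, Complex.norm_cpow_eq_rpow_re_of_pos hpt,
      Complex.norm_real, Complex.norm_real, Real.norm_eq_abs, Real.norm_eq_abs,
      abs_of_nonneg (hS_nonneg p), Complex.sub_re, Complex.one_re]
  -- part 1: integrability
  have hInt : ∀ s : ℂ, Integrable (F s) μ := by
    intro s
    apply Integrable.mono' (hbound_int (s.re - 1)) (hAESM s)
    filter_upwards [hmem_ae] with p hp
    obtain ⟨hpt, hpu⟩ := hp
    rw [hnorm s p hpt]
    calc p.1 ^ (s.re - 1) * (|ψ p.2| * S p)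
        ≤ p.1 ^ (s.re - 1) * (W p.1 * ind p.2) :=
          mul_le_mul_of_nonneg_left (hMain p hpt hpu) (Real.rpow_nonneg (le_of_lt hpt) _)
      _ = (p.1 ^ (s.re - 1) * W p.1) * ind p.2 := by ring
  constructor
  · exact hInt
  · -- differentiability
    intro s₀
    set F' : ℂ → ℝ × ℝ → ℂ := fun s p =>
      (p.1 : ℂ) ^ (s - 1) * Complex.log p.1 * 1 * ((ψ p.2 : ℂ) * ((S p : ℝ) : ℂ)) with hF'_def
    have hF'meas : AEStronglyMeasurable (F' s₀) μ := by
      have hGmeas : Measurable (fun p : ℝ × ℝ =>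
          Complex.exp (Complex.log p.1 * (s₀ - 1)) * Complex.log p.1 * 1 *
            ((ψ p.2 : ℂ) * ((S' p : ℝ) : ℂ))) := by
        apply Measurable.mul
        · apply Measurable.mul_const
          apply Measurable.mul
          · exact Complex.measurable_exp.comp
              ((Complex.measurable_log.comp
                (Complex.measurable_ofReal.comp measurable_fst)).mul_const _)
          · exact Complex.measurable_log.comp (Complex.measurable_ofReal.comp measurable_fst)
        · exact (Complex.measurable_ofReal.comp (hψm.comp measurable_snd)).mul
            (Complex.measurable_ofReal.comp hS'_meas)
      apply hGmeas.aestronglyMeasurable.congr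
      filter_upwards [hmem_ae] with p hp
      obtain ⟨hpt, hpu⟩ := hp
      rw [hF'_def]
      simp only []
      rw [hS'_eq p hpt (le_of_lt hpu),
        Complex.cpow_def_of_ne_zero (Complex.ofReal_ne_zero.2 (ne_of_gt hpt))]
    set bound : ℝ × ℝ → ℝ := fun p =>
      ((p.1 ^ (s₀.re - 3) * W p.1) * ind p.2) + ((p.1 ^ (s₀.re + 1) * W p.1) * ind p.2)
      with hbound_def
    have hbound_integrable : Integrable bound μ :=
      (hbound_int (s₀.re - 3)).add (hbound_int (s₀.re + 1))
    have hind_nonneg : ∀ u : ℝ, 0 ≤ ind u := by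
      intro u
      rw [hind_def]
      exact Set.indicator_nonneg (fun _ _ => hM0) u
    have h_bound : ∀ᵐ p ∂μ, ∀ s ∈ Metric.ball s₀ 1, ‖F' s p‖ ≤ bound p := by
      filter_upwards [hmem_ae] with p hp
      obtain ⟨hpt, hpu⟩ := hp
      intro s hs
      have hres : |s.re - s₀.re| ≤ 1 := by
        have h1 : dist s s₀ < 1 := Metric.mem_ball.1 hs
        rw [Complex.dist_eq] at h1
        calc |s.re - s₀.re| = |(s - s₀).re| := by rw [Complex.sub_re]
          _ ≤ ‖s - s₀‖ := Complex.abs_re_le_norm _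
          _ ≤ 1 := h1.le
      have habs := abs_le.1 hres
      have hnormF' : ‖F' s p‖ = (|Real.log p.1| * p.1 ^ (s.re - 1)) * (|ψ p.2| * S p) := by
        rw [hF'_def]
        simp only []
        rw [mul_one, norm_mul, norm_mul, norm_mul,
          Complex.norm_cpow_eq_rpow_re_of_pos hpt, ← Complex.ofReal_log (le_of_lt hpt),
          Complex.norm_real, Complex.norm_real, Complex.norm_real, Real.norm_eq_abs,
          Real.norm_eq_abs, Real.norm_eq_abs, abs_of_nonneg (hS_nonneg p), Complex.sub_re,
          Complex.one_re]
        ring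
      rw [hnormF']
      have hlog : |Real.log p.1| * p.1 ^ (s.re - 1) ≤ p.1 ^ (s₀.re - 3) + p.1 ^ (s₀.re + 1) := by
        rcases le_or_gt p.1 1 with h1 | h1
        · have hl1 : |Real.log p.1| ≤ p.1⁻¹ := by
            rw [abs_of_nonpos (Real.log_nonpos (le_of_lt hpt) h1)]
            have h2 := Real.log_le_sub_one_of_pos (inv_pos.2 hpt)
            rw [Real.log_inv] at h2
            linarith [inv_pos.2 (show (0:ℝ) < p.1 from hpt)]
          have hl2 : p.1 ^ (s.re - 1) ≤ p.1 ^ (s₀.re - 2) :=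
            Real.rpow_le_rpow_of_exponent_ge hpt h1 (by linarith [habs.1])
          calc |Real.log p.1| * p.1 ^ (s.re - 1) ≤ p.1⁻¹ * p.1 ^ (s₀.re - 2) :=
                mul_le_mul hl1 hl2 (Real.rpow_nonneg (le_of_lt hpt) _) (inv_nonneg.2 (le_of_lt hpt))
            _ = p.1 ^ (s₀.re - 3) := by
                rw [← Real.rpow_neg_one p.1, ← Real.rpow_add hpt]; congr 1; ring
            _ ≤ p.1 ^ (s₀.re - 3) + p.1 ^ (s₀.re + 1) :=
                le_add_of_nonneg_right (Real.rpow_nonneg (le_of_lt hpt) _)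
        · have hl1 : |Real.log p.1| ≤ p.1 := by
            rw [abs_of_nonneg (Real.log_nonneg h1.le)]
            linarith [Real.log_le_sub_one_of_pos hpt]
          have hl2 : p.1 ^ (s.re - 1) ≤ p.1 ^ (s₀.re) :=
            Real.rpow_le_rpow_of_exponent_le h1.le (by linarith [habs.2])
          calc |Real.log p.1| * p.1 ^ (s.re - 1) ≤ p.1 * p.1 ^ (s₀.re) :=
                mul_le_mul hl1 hl2 (Real.rpow_nonneg (le_of_lt hpt) _) (le_of_lt hpt)
            _ = p.1 ^ (s₀.re + 1) := by
                rw [show p.1 * p.1 ^ s₀.re = p.1 ^ (1:ℝ) * p.1 ^ s₀.re by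
                  rw [Real.rpow_one], ← Real.rpow_add hpt]
                congr 1; ring
            _ ≤ p.1 ^ (s₀.re - 3) + p.1 ^ (s₀.re + 1) :=
                le_add_of_nonneg_left (Real.rpow_nonneg (le_of_lt hpt) _)
      calc (|Real.log p.1| * p.1 ^ (s.re - 1)) * (|ψ p.2| * S p)
          ≤ (p.1 ^ (s₀.re - 3) + p.1 ^ (s₀.re + 1)) * (W p.1 * ind p.2) := by
            apply mul_le_mul hlog (hMain p hpt hpu)
              (mul_nonneg (abs_nonneg _) (hS_nonneg p))
              (add_nonneg (Real.rpow_nonneg (le_of_lt hpt) _)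
                (Real.rpow_nonneg (le_of_lt hpt) _))
        _ = bound p := by rw [hbound_def]; ring
    have h_diff : ∀ᵐ p ∂μ, ∀ s ∈ Metric.ball s₀ 1, HasDerivAt (F · p) (F' s p) s := by
      filter_upwards [hmem_ae] with p hp
      obtain ⟨hpt, hpu⟩ := hp
      intro s _
      have h0 : ((p.1 : ℝ) : ℂ) ≠ 0 := Complex.ofReal_ne_zero.2 (ne_of_gt hpt)
      exact (((hasDerivAt_id s).sub_const 1).const_cpow (Or.inl h0)).mul_const _
    have key := hasDerivAt_integral_of_dominated_loc_of_deriv_le (Metric.ball_mem_nhds s₀ one_pos)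
      (Filter.Eventually.of_forall (fun s => hAESM s)) (hInt s₀) hF'meas h_bound
      hbound_integrable h_diff
    exact key.2.differentiableAt
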